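/- arXiv:1007.4118 — 2 statements merged into one kernel-verified Lean document; each statement's English description precedes it below -/
import Mathlib

section
/- Let (A, μ, α) be a multiplicative Hom-flexible algebra over a field k of characteristic 0. Then A is Hom-power associative if and only if x⁴ = α(x²)α(x²) for all x ∈ A, where x² = xx, x³ = x²α(x), x⁴ = x³α²(x). -/
set_option linter.unusedSectionVars false
set_option linter.unusedVariables false


variable {k A : Type*} [Field k] [CharZero k] [AddCommGroup A] [Module k A]

/-- The `n`-th Hom-power: `x^1 = x`, `x^n = x^{n-1} · α^{n-2}(x)`. -/
def homPow (μ : A →ₗ[k] A →ₗ[k] A) (α : A →ₗ[k] A) (x : A) : ℕ → A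
  | 0 => x
  | 1 => x
  | n + 2 => μ (homPow μ α x (n + 1)) ((α ^ n) x)

/-- `A` is `n`-th Hom-power associative. -/
def IsNthHomPowerAssoc (μ : A →ₗ[k] A →ₗ[k] A) (α : A →ₗ[k] A) (n : ℕ) : Prop :=
  ∀ (x : A) (i : ℕ), 1 ≤ i → i ≤ n - 1 →
    homPow μ α x n =
      μ ((α ^ (n - i - 1)) (homPow μ α x i)) ((α ^ (i - 1)) (homPow μ α x (n - i)))

/-- `A` is Hom-power associative. -/
def IsHomPowerAssoc (μ : A →ₗ[k] A →ₗ[k] A) (α : A →ₗ[k] A) : Prop :=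
  ∀ n : ℕ, 2 ≤ n → IsNthHomPowerAssoc μ α n

/-- `A` is up to `n`-th Hom-power associative. -/
def IsUpToNthHomPowerAssoc (μ : A →ₗ[k] A →ₗ[k] A) (α : A →ₗ[k] A) (n : ℕ) : Prop :=
  ∀ m : ℕ, 2 ≤ m → m ≤ n → IsNthHomPowerAssoc μ α m

/-- The Hom-algebra `(A, μ, α)` is multiplicative. -/
def IsMultiplicative (μ : A →ₗ[k] A →ₗ[k] A) (α : A →ₗ[k] A) : Prop :=
  ∀ x y : A, α (μ x y) = μ (α x) (α y)


/-- The Hom-associator `as(x,y,z) = (xy)α(z) − α(x)(yz)`. -/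
def homAssoc (μ : A →ₗ[k] A →ₗ[k] A) (α : A →ₗ[k] A) (x y z : A) : A :=
  μ (μ x y) (α z) - μ (α x) (μ y z)

def PA' (ν : A →ₗ[k] A →ₗ[k] A) (α : A →ₗ[k] A) (m : ℕ) : Prop :=
  ∀ (x : A) (p q : ℕ), p + q + 2 = m →
    homPow ν α x m = ν ((α ^ q) (homPow ν α x (p+1))) ((α ^ p) (homPow ν α x (q+1)))

section Infra
variable (ν : A →ₗ[k] A →ₗ[k] A) (α : A →ₗ[k] A)

lemma homPow_one (x : A) : homPow ν α x 1 = x := rfl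

lemma homPow_succ2 (x : A) (n : ℕ) :
    homPow ν α x (n+2) = ν (homPow ν α x (n+1)) ((α ^ n) x) := rfl

lemma homPow_two (x : A) : homPow ν α x 2 = ν x x := by
  show ν (homPow ν α x 1) ((α ^ 0) x) = ν x x
  rw [pow_zero]; rfl

lemma powAppE (e f : ℕ) (t : A) : (α ^ e) ((α ^ f) t) = (α ^ (e+f)) t := by
  rw [pow_add, Module.End.mul_apply]

lemma powApp1 (e : ℕ) (t : A) : α ((α ^ e) t) = (α ^ (e+1)) t := by
  rw [pow_succ', Module.End.mul_apply]

lemma mulIter (hm : IsMultiplicative ν α) (c : ℕ) : ∀ a b : A,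
    (α ^ c) (ν a b) = ν ((α ^ c) a) ((α ^ c) b) := by
  induction c with
  | zero => simp
  | succ c ih =>
      intro a b
      rw [pow_succ', Module.End.mul_apply, ih, hm, powApp1, powApp1, pow_succ']

lemma lemC (hflex : ∀ x y : A, homAssoc ν α x y x = 0) :
    ∀ (n : ℕ) (x : A), ν ((α ^ n) x) (homPow ν α x (n+1)) = homPow ν α x (n+2) := by
  intro n x
  induction n with
  | zero =>
      show ν ((α ^ 0) x) (homPow ν α x 1) = homPow ν α x 2
      rw [pow_zero, homPow_two]; rfl
  | succ n ih =>
      have h := hflex ((α ^ n) x) (homPow ν α x (n+1))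
      rw [homAssoc, sub_eq_zero] at h
      rw [powApp1] at h
      rw [ih] at h
      have h2 : ν (homPow ν α x (n+1)) ((α ^ n) x) = homPow ν α x (n+2) := rfl
      rw [h2] at h
      have h3 : homPow ν α x (n+3) = ν (homPow ν α x (n+2)) ((α ^ (n+1)) x) := rfl
      rw [show n+1+2 = n+3 from rfl, h3]
      exact h.symm

lemma lemL (hflex : ∀ x y : A, homAssoc ν α x y x = 0) (x y z : A) :
    ν (ν x y) (α z) + ν (ν z y) (α x) = ν (α x) (ν y z) + ν (α z) (ν y x) := by
  linear_combination (norm := (simp only [homAssoc, map_add, LinearMap.add_apply]; abel))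
    hflex (x+z) y - hflex x y - hflex z y

def csq : ℕ → ℚ
  | 0 => 0
  | 1 => 0
  | 2 => 1
  | (m+3) => (8 * csq (m+2) - 3 * csq (m+1) + 4) / 3

lemma csq_step : ∀ m : ℕ, 0 ≤ csq (m+1) ∧ csq (m+1) + 1 ≤ csq (m+2) := by
  intro m
  induction m with
  | zero => norm_num [csq]
  | succ m ih =>
      obtain ⟨h0, h1⟩ := ih
      constructor
      · linarith
      · have : csq (m+3) = (8 * csq (m+2) - 3 * csq (m+1) + 4) / 3 := rfl
        rw [show m+1+2 = m+3 from rfl, this]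
        linarith
lemma csq_pos (m : ℕ) (h : 2 ≤ m) : 0 < csq m := by
  obtain ⟨m', rfl⟩ : ∃ m', m = m' + 2 := ⟨m - 2, by omega⟩
  have h1 := csq_step m'
  linarith [h1.1, h1.2]

def uu (ν : A →ₗ[k] A →ₗ[k] A) (α : A →ₗ[k] A) (x : A) (n m : ℕ) : A :=
  ν ((α ^ (n-m-1)) (homPow ν α x m)) ((α ^ (m-1)) (homPow ν α x (n-m)))

section Infra2
variable (ν : A →ₗ[k] A →ₗ[k] A) (α : A →ₗ[k] A) (x : A)

lemma powApp1' (t : A) : α t = (α^1) t := by rw [pow_one]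

lemma uu_flex (n m e f i j : ℕ) (he : e = n-m-1) (hf : f = m-1) (hi : i = m) (hj : j = n-m) :
    uu ν α x n m = ν ((α ^ e) (homPow ν α x i)) ((α ^ f) (homPow ν α x j)) := by
  subst he hf hi hj; rfl

lemma homPow_flex (m r s : ℕ) (hr : r = m+2) (hs : s = m+1) :
    homPow ν α x r = ν (homPow ν α x s) ((α ^ m) (homPow ν α x 1)) := by
  subst hr hs; rfl

lemma uu_symm (hc : ∀ a b : A, ν a b = ν b a) (n m m' : ℕ) (h1 : 1 ≤ m) (h2 : m + 1 ≤ n)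
    (hm' : m' = n - m) : uu ν α x n m = uu ν α x n m' := by
  subst hm'
  unfold uu
  rw [hc, show n-(n-m)-1 = m-1 by omega, show n-(n-m) = m by omega]

lemma uu_one (hc : ∀ a b : A, ν a b = ν b a) (n : ℕ) (h : 2 ≤ n) :
    uu ν α x n 1 = homPow ν α x n := by
  unfold uu
  rw [hc, show (1:ℕ)-1 = 0 by omega, pow_zero, Module.End.one_apply,
    show n-1-1 = n-2 by omega]
  exact (homPow_flex ν α x (n-2) n (n-1) (by omega) (by omega)).symm

lemma uu_last (n : ℕ) (h : 2 ≤ n) : uu ν α x n (n-1) = homPow ν α x n := by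
  unfold uu
  rw [show n-(n-1)-1 = 0 by omega, pow_zero, Module.End.one_apply, show n-(n-1) = 1 by omega,
    show n-1-1 = n-2 by omega]
  exact (homPow_flex ν α x (n-2) n (n-1) (by omega) (by omega)).symm

end Infra2
set_option maxHeartbeats 1600000 in
lemma polar3 (ν : A →ₗ[k] A →ₗ[k] A) (α : A →ₗ[k] A)
    (hF : ∀ y : A, ν (α (ν y y)) (α (ν y y)) = ν (ν (ν y y) (α y)) ((α^2) y))
    (aa bb cc : A) :
    ν (α (ν aa bb)) (α (ν cc cc)) + ν (α (ν aa bb)) (α (ν cc cc)) + ν (α (ν aa cc)) (α (ν bb cc)) + ν (α (ν aa cc)) (α (ν cc bb)) + ν (α (ν aa cc)) (α (ν bb cc)) + ν (α (ν aa cc)) (α (ν cc bb)) + ν (α (ν bb aa)) (α (ν cc cc)) + ν (α (ν bb aa)) (α (ν cc cc)) + ν (α (ν bb cc)) (α (ν aa cc)) + ν (α (ν bb cc)) (α (ν cc aa)) + ν (α (ν bb cc)) (α (ν aa cc)) + ν (α (ν bb cc)) (α (ν cc aa)) + ν (α (ν cc aa)) (α (ν bb cc)) + ν (α (ν cc aa))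 (α (ν cc bb)) + ν (α (ν cc bb)) (α (ν aa cc)) + ν (α (ν cc bb)) (α (ν cc aa)) + ν (α (ν cc cc)) (α (ν aa bb)) + ν (α (ν cc cc)) (α (ν bb aa)) + ν (α (ν cc aa)) (α (ν bb cc)) + ν (α (ν cc aa)) (α (ν cc bb)) + ν (α (ν cc bb)) (α (ν aa cc)) + ν (α (ν cc bb)) (α (ν cc aa)) + ν (α (ν cc cc)) (α (ν aa bb)) + ν (α (ν cc cc)) (α (ν bb aa)) =
    ν (ν (ν aa bb) (α cc)) ((α^2) cc) + ν (ν (ν aa bb) (α cc)) ((α^2) cc) + ν (ν (ν aa cc) (α bb)) ((α^2) cc) + ν (ν (ν aa cc) (α cc)) ((α^2) bb) + ν (ν (ν aa cc) (α bb)) ((α^2) cc) + ν (ν (ν aa cc) (α cc)) ((α^2) bb) + ν (ν (ν bb aa) (α cc)) ((α^2) cc) + ν (ν (ν bb aa) (α cc)) ((α^2) cc) + ν (ν (ν bb cc) (α aa)) ((α^2) cc) + ν (ν (ν bb cc) (α cc)) ((α^2) aa) + ν (ν (ν bb cc) (α aa)) ((α^2) cc) + ν (ν (ν bb cc) (α cc))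 ((α^2) aa) + ν (ν (ν cc aa) (α bb)) ((α^2) cc) + ν (ν (ν cc aa) (α cc)) ((α^2) bb) + ν (ν (ν cc bb) (α aa)) ((α^2) cc) + ν (ν (ν cc bb) (α cc)) ((α^2) aa) + ν (ν (ν cc cc) (α aa)) ((α^2) bb) + ν (ν (ν cc cc) (α bb)) ((α^2) aa) + ν (ν (ν cc aa) (α bb)) ((α^2) cc) + ν (ν (ν cc aa) (α cc)) ((α^2) bb) + ν (ν (ν cc bb) (α aa)) ((α^2) cc) + ν (ν (ν cc bb) (α cc)) ((α^2) aa) + ν (ν (ν cc cc) (α aa)) ((α^2) bb) + ν (ν (ν cc cc) (α bb)) ((α^2) aa) := by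
  linear_combination (norm := (simp only [map_add, LinearMap.add_apply]; abel)) hF (aa+bb+cc+cc) - hF (aa+bb+cc) - hF (aa+bb+cc) - hF (aa+cc+cc) - hF (bb+cc+cc) + hF (aa+bb) + hF (aa+cc) + hF (aa+cc) + hF (bb+cc) + hF (bb+cc) + hF (cc+cc) - hF aa - hF bb - hF cc - hF cc
set_option maxHeartbeats 1600000 in
lemma R2lem (ν : A →ₗ[k] A →ₗ[k] A) (α : A →ₗ[k] A)
    (hm : IsMultiplicative ν α) (hc : ∀ a b : A, ν a b = ν b a)
    (hF : ∀ y : A, ν (α (ν y y)) (α (ν y y)) = ν (ν (ν y y) (α y)) ((α^2) y))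
    (n : ℕ) (hIH : ∀ m, 2 ≤ m → m < n → PA' ν α m) (x : A)
    (i' j' : ℕ) (hn : i' + j' + 4 = n) :
    (8:k) • uu ν α x n 2 + (16:k) • uu ν α x n (i'+2) =
      (12:k) • homPow ν α x n + (6:k) • uu ν α x n (i'+3) + (6:k) • uu ν α x n (i'+1) := by
  have red : ∀ (p q r c e f ip iq : ℕ), ip = p+1 → iq = q+1 → e = q+c → f = p+c → r = p+q+2 → r+1 ≤ n →
      ν ((α^e) (homPow ν α x ip)) ((α^f) (homPow ν α x iq)) = (α^c) (homPow ν α x r) := by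
    rintro p q r c e f ip iq rfl rfl rfl rfl rfl h
    rw [add_comm q c, add_comm p c, ← powAppE, ← powAppE, ← mulIter ν α hm c,
      ← hIH (p+q+2) (by omega) (by omega) x p q rfl]
  have eAB : ν ((α^j') (homPow ν α x (i'+1))) ((α^i') (homPow ν α x (j'+1))) = homPow ν α x (i'+j'+2) := by
    have h := red i' j' (i'+j'+2) 0 j' i' (i'+1) (j'+1) rfl rfl (by omega) (by omega) rfl (by omega)
    rwa [pow_zero, Module.End.one_apply] at h
  have eBA : ν ((α^i') (homPow ν α x (j'+1))) ((α^j') (homPow ν α x (i'+1))) = homPow ν α x (i'+j'+2) := by rw [hc]; exact eAB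
  have eAC : ν ((α^j') (homPow ν α x (i'+1))) ((α^(i'+j')) (homPow ν α x 1)) = (α^j') (homPow ν α x (i'+2)) :=
    red i' 0 (i'+2) j' j' (i'+j') (i'+1) 1 rfl rfl (by omega) (by omega) (by omega) (by omega)
  have eCA : ν ((α^(i'+j')) (homPow ν α x 1)) ((α^j') (homPow ν α x (i'+1))) = (α^j') (homPow ν α x (i'+2)) := by rw [hc]; exact eAC
  have eBC : ν ((α^i') (homPow ν α x (j'+1))) ((α^(i'+j')) (homPow ν α x 1)) = (α^i') (homPow ν α x (j'+2)) :=
    red j' 0 (j'+2) i' i' (i'+j') (j'+1) 1 rfl rfl (by omega) (by omega) (by omega) (by omega)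
  have eCB : ν ((α^(i'+j')) (homPow ν α x 1)) ((α^i') (homPow ν α x (j'+1))) = (α^i') (homPow ν α x (j'+2)) := by rw [hc]; exact eBC
  have eCC : ν ((α^(i'+j')) (homPow ν α x 1)) ((α^(i'+j')) (homPow ν α x 1)) = (α^(i'+j')) (homPow ν α x 2) :=
    red 0 0 2 (i'+j') (i'+j') (i'+j') 1 1 rfl rfl (by omega) (by omega) (by omega) (by omega)


  have t0 : ν (α (ν ((α^j') (homPow ν α x (i'+1))) ((α^i') (homPow ν α x (j'+1))))) (α (ν ((α^(i'+j')) (homPow ν α x 1)) ((α^(i'+j')) (homPow ν α x 1)))) = uu ν α x n (i'+j'+2) := by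
      rw [eAB, eCC, powApp1, powApp1' α (homPow ν α x (i'+j'+2))]; exact (uu_flex ν α x n (i'+j'+2) (1) (i'+j'+1) (i'+j'+2) (2) (by omega) (by omega) (by omega) (by omega)).symm
  have t1 : ν (α (ν ((α^(i'+j')) (homPow ν α x 1)) ((α^(i'+j')) (homPow ν α x 1)))) (α (ν ((α^j') (homPow ν α x (i'+1))) ((α^i') (homPow ν α x (j'+1))))) = uu ν α x n 2 := by
      rw [eAB, eCC, powApp1, powApp1' α (homPow ν α x (i'+j'+2))]; exact (uu_flex ν α x n (2) (i'+j'+1) (1) (2) (i'+j'+2) (by omega) (by omega) (by omega) (by omega)).symm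
  have t2 : ν (α (ν ((α^i') (homPow ν α x (j'+1))) ((α^j') (homPow ν α x (i'+1))))) (α (ν ((α^(i'+j')) (homPow ν α x 1)) ((α^(i'+j')) (homPow ν α x 1)))) = uu ν α x n (i'+j'+2) := by
      rw [eBA, eCC, powApp1, powApp1' α (homPow ν α x (i'+j'+2))]; exact (uu_flex ν α x n (i'+j'+2) (1) (i'+j'+1) (i'+j'+2) (2) (by omega) (by omega) (by omega) (by omega)).symm
  have t3 : ν (α (ν ((α^(i'+j')) (homPow ν α x 1)) ((α^(i'+j')) (homPow ν α x 1)))) (α (ν ((α^i') (homPow ν α x (j'+1))) ((α^j') (homPow ν α x (i'+1))))) = uu ν α x n 2 := by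
      rw [eBA, eCC, powApp1, powApp1' α (homPow ν α x (i'+j'+2))]; exact (uu_flex ν α x n (2) (i'+j'+1) (1) (2) (i'+j'+2) (by omega) (by omega) (by omega) (by omega)).symm
  have t4 : ν (α (ν ((α^j') (homPow ν α x (i'+1))) ((α^(i'+j')) (homPow ν α x 1)))) (α (ν ((α^i') (homPow ν α x (j'+1))) ((α^(i'+j')) (homPow ν α x 1)))) = uu ν α x n (i'+2) := by
      rw [eAC, eBC, powApp1, powApp1]; exact (uu_flex ν α x n (i'+2) (j'+1) (i'+1) (i'+2) (j'+2) (by omega) (by omega) (by omega) (by omega)).symm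
  have t5 : ν (α (ν ((α^i') (homPow ν α x (j'+1))) ((α^(i'+j')) (homPow ν α x 1)))) (α (ν ((α^j') (homPow ν α x (i'+1))) ((α^(i'+j')) (homPow ν α x 1)))) = uu ν α x n (j'+2) := by
      rw [eAC, eBC, powApp1, powApp1]; exact (uu_flex ν α x n (j'+2) (i'+1) (j'+1) (j'+2) (i'+2) (by omega) (by omega) (by omega) (by omega)).symm
  have t6 : ν (α (ν ((α^j') (homPow ν α x (i'+1))) ((α^(i'+j')) (homPow ν α x 1)))) (α (ν ((α^(i'+j')) (homPow ν α x 1)) ((α^i') (homPow ν α x (j'+1))))) = uu ν α x n (i'+2) := by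
      rw [eAC, eCB, powApp1, powApp1]; exact (uu_flex ν α x n (i'+2) (j'+1) (i'+1) (i'+2) (j'+2) (by omega) (by omega) (by omega) (by omega)).symm
  have t7 : ν (α (ν ((α^(i'+j')) (homPow ν α x 1)) ((α^i') (homPow ν α x (j'+1))))) (α (ν ((α^j') (homPow ν α x (i'+1))) ((α^(i'+j')) (homPow ν α x 1)))) = uu ν α x n (j'+2) := by
      rw [eAC, eCB, powApp1, powApp1]; exact (uu_flex ν α x n (j'+2) (i'+1) (j'+1) (j'+2) (i'+2) (by omega) (by omega) (by omega) (by omega)).symm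
  have t8 : ν (α (ν ((α^(i'+j')) (homPow ν α x 1)) ((α^j') (homPow ν α x (i'+1))))) (α (ν ((α^i') (homPow ν α x (j'+1))) ((α^(i'+j')) (homPow ν α x 1)))) = uu ν α x n (i'+2) := by
      rw [eCA, eBC, powApp1, powApp1]; exact (uu_flex ν α x n (i'+2) (j'+1) (i'+1) (i'+2) (j'+2) (by omega) (by omega) (by omega) (by omega)).symm
  have t9 : ν (α (ν ((α^i') (homPow ν α x (j'+1))) ((α^(i'+j')) (homPow ν α x 1)))) (α (ν ((α^(i'+j')) (homPow ν α x 1)) ((α^j') (homPow ν α x (i'+1))))) = uu ν α x n (j'+2) := by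
      rw [eCA, eBC, powApp1, powApp1]; exact (uu_flex ν α x n (j'+2) (i'+1) (j'+1) (j'+2) (i'+2) (by omega) (by omega) (by omega) (by omega)).symm
  have t10 : ν (α (ν ((α^(i'+j')) (homPow ν α x 1)) ((α^j') (homPow ν α x (i'+1))))) (α (ν ((α^(i'+j')) (homPow ν α x 1)) ((α^i') (homPow ν α x (j'+1))))) = uu ν α x n (i'+2) := by
      rw [eCA, eCB, powApp1, powApp1]; exact (uu_flex ν α x n (i'+2) (j'+1) (i'+1) (i'+2) (j'+2) (by omega) (by omega) (by omega) (by omega)).symm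
  have t11 : ν (α (ν ((α^(i'+j')) (homPow ν α x 1)) ((α^i') (homPow ν α x (j'+1))))) (α (ν ((α^(i'+j')) (homPow ν α x 1)) ((α^j') (homPow ν α x (i'+1))))) = uu ν α x n (j'+2) := by
      rw [eCA, eCB, powApp1, powApp1]; exact (uu_flex ν α x n (j'+2) (i'+1) (j'+1) (j'+2) (i'+2) (by omega) (by omega) (by omega) (by omega)).symm
  have t12 : ν (ν (ν ((α^j') (homPow ν α x (i'+1))) ((α^i') (homPow ν α x (j'+1)))) (α ((α^(i'+j')) (homPow ν α x 1)))) ((α^2) ((α^(i'+j')) (homPow ν α x 1))) = homPow ν α x n := by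
      rw [eAB, powApp1, powAppE, show 2+(i'+j') = i'+j'+2 by omega,
      ← homPow_flex ν α x (i'+j'+1) (i'+j'+3) (i'+j'+2) (by omega) (by omega),
      ← homPow_flex ν α x (i'+j'+2) n (i'+j'+3) (by omega) (by omega)]
  have t13 : ν (ν (ν ((α^i') (homPow ν α x (j'+1))) ((α^j') (homPow ν α x (i'+1)))) (α ((α^(i'+j')) (homPow ν α x 1)))) ((α^2) ((α^(i'+j')) (homPow ν α x 1))) = homPow ν α x n := by
      rw [eBA, powApp1, powAppE, show 2+(i'+j') = i'+j'+2 by omega,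
      ← homPow_flex ν α x (i'+j'+1) (i'+j'+3) (i'+j'+2) (by omega) (by omega),
      ← homPow_flex ν α x (i'+j'+2) n (i'+j'+3) (by omega) (by omega)]
  have t14 : ν (ν (ν ((α^j') (homPow ν α x (i'+1))) ((α^(i'+j')) (homPow ν α x 1))) (α ((α^i') (homPow ν α x (j'+1))))) ((α^2) ((α^(i'+j')) (homPow ν α x 1))) = homPow ν α x n := by
      rw [eAC, powApp1, powAppE, show 2+(i'+j') = i'+j'+2 by omega]
      have h := red (i'+1) j' (i'+j'+3) 0 j' (i'+1) (i'+2) (j'+1) rfl rfl (by omega) (by omega) (by omega) (by omega)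
      rw [pow_zero, Module.End.one_apply] at h
      rw [h, ← homPow_flex ν α x (i'+j'+2) n (i'+j'+3) (by omega) (by omega)]
  have t15 : ν (ν (ν ((α^(i'+j')) (homPow ν α x 1)) ((α^j') (homPow ν α x (i'+1)))) (α ((α^i') (homPow ν α x (j'+1))))) ((α^2) ((α^(i'+j')) (homPow ν α x 1))) = homPow ν α x n := by
      rw [eCA, powApp1, powAppE, show 2+(i'+j') = i'+j'+2 by omega]
      have h := red (i'+1) j' (i'+j'+3) 0 j' (i'+1) (i'+2) (j'+1) rfl rfl (by omega) (by omega) (by omega) (by omega)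
      rw [pow_zero, Module.End.one_apply] at h
      rw [h, ← homPow_flex ν α x (i'+j'+2) n (i'+j'+3) (by omega) (by omega)]
  have t16 : ν (ν (ν ((α^i') (homPow ν α x (j'+1))) ((α^(i'+j')) (homPow ν α x 1))) (α ((α^j') (homPow ν α x (i'+1))))) ((α^2) ((α^(i'+j')) (homPow ν α x 1))) = homPow ν α x n := by
      rw [eBC, powApp1, powAppE, show 2+(i'+j') = i'+j'+2 by omega]
      have h := red (j'+1) i' (i'+j'+3) 0 i' (j'+1) (j'+2) (i'+1) rfl rfl (by omega) (by omega) (by omega) (by omega)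
      rw [pow_zero, Module.End.one_apply] at h
      rw [h, ← homPow_flex ν α x (i'+j'+2) n (i'+j'+3) (by omega) (by omega)]
  have t17 : ν (ν (ν ((α^(i'+j')) (homPow ν α x 1)) ((α^i') (homPow ν α x (j'+1)))) (α ((α^j') (homPow ν α x (i'+1))))) ((α^2) ((α^(i'+j')) (homPow ν α x 1))) = homPow ν α x n := by
      rw [eCB, powApp1, powAppE, show 2+(i'+j') = i'+j'+2 by omega]
      have h := red (j'+1) i' (i'+j'+3) 0 i' (j'+1) (j'+2) (i'+1) rfl rfl (by omega) (by omega) (by omega) (by omega)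
      rw [pow_zero, Module.End.one_apply] at h
      rw [h, ← homPow_flex ν α x (i'+j'+2) n (i'+j'+3) (by omega) (by omega)]
  have t18 : ν (ν (ν ((α^j') (homPow ν α x (i'+1))) ((α^(i'+j')) (homPow ν α x 1))) (α ((α^(i'+j')) (homPow ν α x 1)))) ((α^2) ((α^i') (homPow ν α x (j'+1)))) = uu ν α x n (i'+3) := by
      rw [eAC, powApp1, powAppE, show 2+i' = i'+2 by omega,
      red (i'+1) 0 (i'+3) j' j' (i'+j'+1) (i'+2) 1 rfl rfl (by omega) (by omega) (by omega) (by omega)]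
      exact (uu_flex ν α x n (i'+3) (j') (i'+2) (i'+3) (j'+1) (by omega) (by omega) (by omega) (by omega)).symm
  have t19 : ν (ν (ν ((α^(i'+j')) (homPow ν α x 1)) ((α^j') (homPow ν α x (i'+1)))) (α ((α^(i'+j')) (homPow ν α x 1)))) ((α^2) ((α^i') (homPow ν α x (j'+1)))) = uu ν α x n (i'+3) := by
      rw [eCA, powApp1, powAppE, show 2+i' = i'+2 by omega,
      red (i'+1) 0 (i'+3) j' j' (i'+j'+1) (i'+2) 1 rfl rfl (by omega) (by omega) (by omega) (by omega)]
      exact (uu_flex ν α x n (i'+3) (j') (i'+2) (i'+3) (j'+1) (by omega) (by omega) (by omega) (by omega)).symm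
  have t20 : ν (ν (ν ((α^i') (homPow ν α x (j'+1))) ((α^(i'+j')) (homPow ν α x 1))) (α ((α^(i'+j')) (homPow ν α x 1)))) ((α^2) ((α^j') (homPow ν α x (i'+1)))) = uu ν α x n (j'+3) := by
      rw [eBC, powApp1, powAppE, show 2+j' = j'+2 by omega,
      red (j'+1) 0 (j'+3) i' i' (i'+j'+1) (j'+2) 1 rfl rfl (by omega) (by omega) (by omega) (by omega)]
      exact (uu_flex ν α x n (j'+3) (i') (j'+2) (j'+3) (i'+1) (by omega) (by omega) (by omega) (by omega)).symm
  have t21 : ν (ν (ν ((α^(i'+j')) (homPow ν α x 1)) ((α^i') (homPow ν α x (j'+1)))) (α ((α^(i'+j')) (homPow ν α x 1)))) ((α^2) ((α^j') (homPow ν α x (i'+1)))) = uu ν α x n (j'+3) := by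
      rw [eCB, powApp1, powAppE, show 2+j' = j'+2 by omega,
      red (j'+1) 0 (j'+3) i' i' (i'+j'+1) (j'+2) 1 rfl rfl (by omega) (by omega) (by omega) (by omega)]
      exact (uu_flex ν α x n (j'+3) (i') (j'+2) (j'+3) (i'+1) (by omega) (by omega) (by omega) (by omega)).symm
  have t22 : ν (ν (ν ((α^(i'+j')) (homPow ν α x 1)) ((α^(i'+j')) (homPow ν α x 1))) (α ((α^j') (homPow ν α x (i'+1))))) ((α^2) ((α^i') (homPow ν α x (j'+1)))) = uu ν α x n (i'+3) := by
      rw [eCC, powApp1, powAppE, show 2+i' = i'+2 by omega,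
      red 1 i' (i'+3) j' (i'+j') (j'+1) 2 (i'+1) rfl rfl (by omega) (by omega) (by omega) (by omega)]
      exact (uu_flex ν α x n (i'+3) (j') (i'+2) (i'+3) (j'+1) (by omega) (by omega) (by omega) (by omega)).symm
  have t23 : ν (ν (ν ((α^(i'+j')) (homPow ν α x 1)) ((α^(i'+j')) (homPow ν α x 1))) (α ((α^i') (homPow ν α x (j'+1))))) ((α^2) ((α^j') (homPow ν α x (i'+1)))) = uu ν α x n (j'+3) := by
      rw [eCC, powApp1, powAppE, show 2+j' = j'+2 by omega,
      red 1 j' (j'+3) i' (i'+j') (i'+1) 2 (j'+1) rfl rfl (by omega) (by omega) (by omega) (by omega)]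
      exact (uu_flex ν α x n (j'+3) (i') (j'+2) (j'+3) (i'+1) (by omega) (by omega) (by omega) (by omega)).symm
  have hp := polar3 ν α hF ((α^j') (homPow ν α x (i'+1))) ((α^i') (homPow ν α x (j'+1))) ((α^(i'+j')) (homPow ν α x 1))
  rw [t0, t1, t2, t3, t4, t5, t6, t7, t8, t9, t10, t11, t12, t13, t14, t15, t16, t17, t18, t19, t20, t21, t22, t23] at hp
  rw [← uu_symm ν α x hc n (i'+1) (j'+3) (by omega) (by omega) (by omega),
      ← uu_symm ν α x hc n (i'+2) (j'+2) (by omega) (by omega) (by omega),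
      ← uu_symm ν α x hc n 2 (i'+j'+2) (by omega) (by omega) (by omega)] at hp
  linear_combination (norm := module) hp

lemma commStep (ν : A →ₗ[k] A →ₗ[k] A) (α : A →ₗ[k] A)
    (hm : IsMultiplicative ν α) (hc : ∀ a b : A, ν a b = ν b a)
    (h4 : ∀ x : A, homPow ν α x 4 = ν (α (ν x x)) (α (ν x x)))
    (n : ℕ) (hn : 5 ≤ n)
    (hIH : ∀ m, 2 ≤ m → m < n → PA' ν α m) : PA' ν α n := by
  have hF : ∀ y : A, ν (α (ν y y)) (α (ν y y)) = ν (ν (ν y y) (α y)) ((α^2) y) := by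
    intro y; rw [← h4 y]; rfl
  intro x p q hpq
  have hu1 : uu ν α x n 1 = homPow ν α x n := uu_one ν α x hc n (by omega)
  have hulast : uu ν α x n (n-1) = homPow ν α x n := uu_last ν α x n (by omega)
  have hrec : ∀ m, 1 ≤ m → m + 1 ≤ n →
      uu ν α x n m = homPow ν α x n + ((csq m : ℚ) : k) • (uu ν α x n 2 - homPow ν α x n) := by
    intro m
    induction m using Nat.strong_induction_on with
    | _ m IH =>
      intro h1 h2
      rcases m with _|m1
      · omega
      rcases m1 with _|m2
      · rw [show ((csq 1 : ℚ)) = 0 from rfl]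
        simp [hu1]
      rcases m2 with _|t
      · rw [show ((csq 2 : ℚ)) = 1 from rfl]
        simp
      · rw [show t+1+1+1 = t+3 by omega]
        have hR := R2lem ν α hm hc hF n hIH x t (n-t-4) (by omega)
        have ih1 := IH (t+1) (by omega) (by omega) (by omega)
        have ih2 := IH (t+2) (by omega) (by omega) (by omega)
        rw [show (csq (t+3)) = (8*csq (t+2) - 3*csq (t+1) + 4)/3 from rfl]
        push_cast
        linear_combination (norm := module) (-(6:k)⁻¹) • hR + ((8:k)/3) • ih2 - (1:k) • ih1
  have hzero : uu ν α x n 2 = homPow ν α x n := by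
    have h1 := hrec (n-1) (by omega) (by omega)
    rw [hulast] at h1
    have h2 : ((csq (n-1) : ℚ) : k) • (uu ν α x n 2 - homPow ν α x n) = 0 := by
      linear_combination (norm := module) (-1 : k) • h1
    have hne : ((csq (n-1) : ℚ) : k) ≠ 0 := by
      have := csq_pos (n-1) (by omega)
      exact_mod_cast this.ne'
    have h3 := (smul_eq_zero.mp h2).resolve_left hne
    exact sub_eq_zero.mp h3
  have hfin := hrec (p+1) (by omega) (by omega)
  rw [hzero, sub_self, smul_zero, add_zero] at hfin
  rw [uu_flex ν α x n (p+1) q p (p+1) (q+1) (by omega) (by omega) rfl (by omega)] at hfin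
  exact hfin.symm

lemma PA'_two (ν : A →ₗ[k] A →ₗ[k] A) (α : A →ₗ[k] A) : PA' ν α 2 := by
  intro x p q h
  obtain rfl : p = 0 := by omega
  obtain rfl : q = 0 := by omega
  simp [homPow_two, homPow_one, pow_zero, Module.End.one_apply]

lemma PA'_three (ν : A →ₗ[k] A →ₗ[k] A) (α : A →ₗ[k] A) (hc : ∀ a b : A, ν a b = ν b a) :
    PA' ν α 3 := by
  intro x p q h
  rcases (by omega : p = 1 ∧ q = 0 ∨ p = 0 ∧ q = 1) with ⟨rfl, rfl⟩ | ⟨rfl, rfl⟩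
  · rw [pow_zero, Module.End.one_apply]
    exact homPow_flex ν α x 1 3 2 (by omega) (by omega)
  · rw [hc, pow_zero, Module.End.one_apply]
    exact homPow_flex ν α x 1 3 2 (by omega) (by omega)

lemma PA'_four (ν : A →ₗ[k] A →ₗ[k] A) (α : A →ₗ[k] A) (hc : ∀ a b : A, ν a b = ν b a)
    (h4 : ∀ x : A, homPow ν α x 4 = ν (α (ν x x)) (α (ν x x))) : PA' ν α 4 := by
  intro x p q h
  rcases (by omega : p = 2 ∧ q = 0 ∨ p = 0 ∧ q = 2 ∨ p = 1 ∧ q = 1) with ⟨rfl, rfl⟩ | ⟨rfl, rfl⟩ | ⟨rfl, rfl⟩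
  · rw [pow_zero, Module.End.one_apply]
    exact homPow_flex ν α x 2 4 3 (by omega) (by omega)
  · rw [hc, pow_zero, Module.End.one_apply]
    exact homPow_flex ν α x 2 4 3 (by omega) (by omega)
  · rw [pow_one, homPow_two]
    exact h4 x

lemma commPA (ν : A →ₗ[k] A →ₗ[k] A) (α : A →ₗ[k] A)
    (hm : IsMultiplicative ν α) (hc : ∀ a b : A, ν a b = ν b a)
    (h4 : ∀ x : A, homPow ν α x 4 = ν (α (ν x x)) (α (ν x x))) :
    ∀ m, 2 ≤ m → PA' ν α m := by
  intro m
  induction m using Nat.strong_induction_on with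
  | _ m IH =>
    intro h2
    rcases Nat.lt_or_ge m 5 with h5 | h5
    · interval_cases m
      · exact PA'_two ν α
      · exact PA'_three ν α hc
      · exact PA'_four ν α hc h4
    · exact commStep ν α hm hc h4 m h5 (fun m' ha hb => IH m' hb ha)

section Master
variable (μ : A →ₗ[k] A →ₗ[k] A) (α : A →ₗ[k] A)

noncomputable def nup (μ : A →ₗ[k] A →ₗ[k] A) : A →ₗ[k] A →ₗ[k] A := (2:k)⁻¹ • (μ + μ.flip)

lemma nup_apply (a b : A) : nup μ a b = (2:k)⁻¹ • (μ a b + μ b a) := by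
  simp [nup, LinearMap.smul_apply, LinearMap.add_apply, LinearMap.flip_apply]

lemma half_add (y : A) : (2:k)⁻¹ • (y + y) = y := by
  rw [← two_smul k y, smul_smul, inv_mul_cancel₀ (two_ne_zero), one_smul]

lemma nup_comm (a b : A) : nup μ a b = nup μ b a := by
  rw [nup_apply, nup_apply, add_comm]

lemma nup_mult (hmul : IsMultiplicative μ α) : IsMultiplicative (nup μ) α := by
  intro a b
  rw [nup_apply, nup_apply, map_smul, map_add, hmul, hmul]

lemma pow_agree (hmul : IsMultiplicative μ α) (hflex : ∀ x y : A, homAssoc μ α x y x = 0) :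
    ∀ (x : A) (m : ℕ), homPow (nup μ) α x m = homPow μ α x m := by
  intro x m
  induction m using Nat.strong_induction_on with
  | _ m IH =>
    rcases m with _|m1
    · rfl
    rcases m1 with _|m
    · rfl
    · rw [show m+1+1 = m+2 by omega, homPow_succ2 (nup μ) α x m, IH (m+1) (by omega),
        nup_apply, lemC μ α hflex m x,
        show μ (homPow μ α x (m+1)) ((α^m) x) = homPow μ α x (m+2) from rfl]
      exact half_add _

lemma nup4 (hmul : IsMultiplicative μ α) (hflex : ∀ x y : A, homAssoc μ α x y x = 0)
    (hfour : ∀ x : A, homPow μ α x 4 = μ (α (μ x x)) (α (μ x x))) :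
    ∀ x : A, homPow (nup μ) α x 4 = nup μ (α (nup μ x x)) (α (nup μ x x)) := by
  intro x
  have e : nup μ x x = μ x x := by rw [nup_apply]; exact half_add _
  rw [pow_agree μ α hmul hflex, hfour x, e, nup_apply]
  exact (half_add _).symm

def Wp (a' b' : ℕ) : Prop := ∀ x : A,
  μ ((α^b') (homPow μ α x (a'+1))) ((α^a') (homPow μ α x (b'+1))) =
    μ ((α^a') (homPow μ α x (b'+1))) ((α^b') (homPow μ α x (a'+1)))

lemma PAfromW (hmul : IsMultiplicative μ α) (hflex : ∀ x y : A, homAssoc μ α x y x = 0)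
    (hfour : ∀ x : A, homPow μ α x 4 = μ (α (μ x x)) (α (μ x x)))
    (m : ℕ) (hm : 2 ≤ m) (hW : ∀ a b, a + b + 2 = m → Wp μ α a b) : PA' μ α m := by
  intro x p q hpq
  have hν := commPA (nup μ) α (nup_mult μ α hmul) (nup_comm μ) (nup4 μ α hmul hflex hfour)
    m hm x p q hpq
  rw [pow_agree μ α hmul hflex, pow_agree μ α hmul hflex, pow_agree μ α hmul hflex,
    nup_apply] at hν
  rw [hW p q hpq x] at hν
  rw [half_add] at hν
  rw [hW p q hpq x]
  exact hν

lemma lemC' (hflex : ∀ x y : A, homAssoc μ α x y x = 0) (x : A) (n r s : ℕ)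
    (hr : r = n+2) (hs : s = n+1) :
    μ ((α^n) (homPow μ α x 1)) (homPow μ α x s) = homPow μ α x r := by
  subst hr hs; exact lemC μ α hflex n x

lemma Wall (hmul : IsMultiplicative μ α) (hflex : ∀ x y : A, homAssoc μ α x y x = 0)
    (hfour : ∀ x : A, homPow μ α x 4 = μ (α (μ x x)) (α (μ x x))) :
    ∀ s a b, a + b + 2 ≤ s → Wp μ α a b := by
  intro s
  induction s using Nat.strong_induction_on with
  | _ s IH =>
    intro a b hab x
    rcases b with _|b'
    · rw [pow_zero, Module.End.one_apply, homPow_one, lemC μ α hflex a x]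
      rfl
    rcases a with _|a'
    · rw [pow_zero, Module.End.one_apply, homPow_one, lemC μ α hflex (b'+1) x]
      rfl
    · have hPA : PA' μ α (a'+b'+3) := PAfromW μ α hmul hflex hfour (a'+b'+3) (by omega)
        (fun aa bb h => IH (a'+b'+3) (by omega) aa bb (by omega))
      have e1 := (hPA x (a'+1) b' (by omega)).symm
      have eYU := IH (a'+b'+3) (by omega) b' (a'+1) (by omega) x
      have eZY : μ ((α^(a'+b'+1)) (homPow μ α x 1)) ((α^(a'+1)) (homPow μ α x (b'+1))) =
          (α^(a'+1)) (homPow μ α x (b'+2)) := by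
        rw [show a'+b'+1 = a'+1+b' by omega, ← powAppE α (a'+1) b' (homPow μ α x 1),
          ← mulIter μ α hmul (a'+1), lemC' μ α hflex x b' (b'+2) (b'+1) rfl rfl]
      have eYZ : μ ((α^(a'+1)) (homPow μ α x (b'+1))) ((α^(a'+b'+1)) (homPow μ α x 1)) =
          (α^(a'+1)) (homPow μ α x (b'+2)) := by
        rw [show a'+b'+1 = a'+1+b' by omega, ← powAppE α (a'+1) b' (homPow μ α x 1),
          ← mulIter μ α hmul (a'+1), ← homPow_flex μ α x b' (b'+2) (b'+1) rfl rfl]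
      have hL := lemL μ α hflex ((α^b') (homPow μ α x (a'+1+1)))
        ((α^(a'+1)) (homPow μ α x (b'+1))) ((α^(a'+b'+1)) (homPow μ α x 1))
      rw [eYU, e1] at hL
      simp only [powApp1] at hL
      rw [← homPow_flex μ α x (a'+b'+1+1) (a'+b'+4) (a'+b'+3) (by omega) (by omega)] at hL
      rw [eZY, eYZ] at hL
      rw [lemC' μ α hflex x (a'+b'+1+1) (a'+b'+4) (a'+b'+3) (by omega) (by omega)] at hL
      show μ ((α^(b'+1)) (homPow μ α x (a'+1+1))) ((α^(a'+1)) (homPow μ α x (b'+1+1))) = _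
      rw [show b'+1+1 = b'+2 by omega]
      linear_combination (norm := module) (-1:k) • hL

end Master


/-- Corollary: a multiplicative Hom-flexible algebra is Hom-power associative iff
`x⁴ = α(x²)α(x²)` for all `x`. -/
theorem stmt18 (μ : A →ₗ[k] A →ₗ[k] A) (α : A →ₗ[k] A)
    (hmul : IsMultiplicative μ α)
    (hflex : ∀ x y : A, homAssoc μ α x y x = 0) :
    IsHomPowerAssoc μ α ↔
      ∀ x : A, homPow μ α x 4 = μ (α (μ x x)) (α (μ x x)) := by
  constructor
  · intro h x
    have h2 := h 4 (by norm_num) x 2 (by norm_num) (by norm_num)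
    rw [show (4:ℕ)-2 = 2 from rfl, pow_one, homPow_two] at h2
    exact h2
  · intro h4 n hn x i hi1 hi2
    have hW := Wall μ α hmul hflex h4
    have hPA : PA' μ α n := PAfromW μ α hmul hflex h4 n hn
      (fun a b hab => hW (a+b+2) a b le_rfl)
    have h3 := hPA x (i-1) (n-i-1) (by omega)
    rw [show i-1+1 = i by omega, show n-i-1+1 = n-i by omega] at h3
    exact h3
end Infra
end

section
/- Let (A, μ, α) be a multiplicative Hom-algebra over a field k of characteristic 0 that is either a right Hom-alternative algebra or a non-commutative Hom-Jordan algebra. Then A is Hom-power associative. -/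
variable {k A : Type*} [Field k] [CharZero k] [AddCommGroup A] [Module k A]

/-- `A` is right Hom-alternative: `as(y,x,x) = 0`. -/
def IsRightHomAlternative (μ : A →ₗ[k] A →ₗ[k] A) (α : A →ₗ[k] A) : Prop :=
  ∀ x y : A, homAssoc μ α y x x = 0

/-- `A` is a non-commutative Hom-Jordan algebra: it is Hom-flexible and satisfies
`as(x²,α(y),α(x)) = 0`. -/
def IsNoncommHomJordan (μ : A →ₗ[k] A →ₗ[k] A) (α : A →ₗ[k] A) : Prop :=
  (∀ x y : A, homAssoc μ α x y x = 0) ∧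
  (∀ x y : A, homAssoc μ α (μ x x) (α y) (α x) = 0)


set_option linter.unusedSectionVars false


private lemma perm3 (μ : A →ₗ[k] A →ₗ[k] A) (α : A →ₗ[k] A)
    (hD : ∀ y : A, μ (μ y y) (α y) = μ (α y) (μ y y)) (u v w : A) :
    μ (μ u v) (α w) +
      μ (μ u w) (α v) +
      μ (μ v u) (α w) +
      μ (μ v w) (α u) +
      μ (μ w u) (α v) +
      μ (μ w v) (α u)
    = μ (α u) (μ v w) +
      μ (α u) (μ w v) +
      μ (α v) (μ u w) +
      μ (α v) (μ w u) +
      μ (α w) (μ u v) +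
      μ (α w) (μ v u) := by
  have e : ∀ y : A, μ (μ y y) (α y) - μ (α y) (μ y y) = 0 := fun y => sub_eq_zero_of_eq (hD y)
  have key : (μ (μ (u+v+w) (u+v+w)) (α (u+v+w)) - μ (α (u+v+w)) (μ (u+v+w) (u+v+w)))
      - (μ (μ (u+v) (u+v)) (α (u+v)) - μ (α (u+v)) (μ (u+v) (u+v)))
      - (μ (μ (u+w) (u+w)) (α (u+w)) - μ (α (u+w)) (μ (u+w) (u+w)))
      - (μ (μ (v+w) (v+w)) (α (v+w)) - μ (α (v+w)) (μ (v+w) (v+w)))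
      + (μ (μ (u) (u)) (α (u)) - μ (α (u)) (μ (u) (u)))
      + (μ (μ (v) (v)) (α (v)) - μ (α (v)) (μ (v) (v)))
      + (μ (μ (w) (w)) (α (w)) - μ (α (w)) (μ (w) (w))) = 0 := by
    rw [e (u+v+w), e (u+v), e (u+w), e (v+w), e (u), e (v), e (w)]; abel
  rw [← sub_eq_zero, ← key]
  simp only [map_add, LinearMap.add_apply]
  abel

set_option maxHeartbeats 3000000 in
private lemma perm4 (μ : A →ₗ[k] A →ₗ[k] A) (α : A →ₗ[k] A)
    (hD : ∀ y : A, μ (μ (μ y y) (α y)) (α (α y)) = μ (μ (α y) (α y)) (μ (α y) (α y)))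
    (u v w z : A) :
    μ (μ (μ u v) (α w)) (α (α z)) +
      μ (μ (μ u v) (α z)) (α (α w)) +
      μ (μ (μ u w) (α v)) (α (α z)) +
      μ (μ (μ u w) (α z)) (α (α v)) +
      μ (μ (μ u z) (α v)) (α (α w)) +
      μ (μ (μ u z) (α w)) (α (α v)) +
      μ (μ (μ v u) (α w)) (α (α z)) +
      μ (μ (μ v u) (α z)) (α (α w)) +
      μ (μ (μ v w) (α u)) (α (α z)) +
      μ (μ (μ v w) (α z)) (α (α u)) +
      μ (μ (μ v z) (α u)) (α (α w)) +
      μ (μ (μ v z) (α w)) (α (α u)) +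
      μ (μ (μ w u) (α v)) (α (α z)) +
      μ (μ (μ w u) (α z)) (α (α v)) +
      μ (μ (μ w v) (α u)) (α (α z)) +
      μ (μ (μ w v) (α z)) (α (α u)) +
      μ (μ (μ w z) (α u)) (α (α v)) +
      μ (μ (μ w z) (α v)) (α (α u)) +
      μ (μ (μ z u) (α v)) (α (α w)) +
      μ (μ (μ z u) (α w)) (α (α v)) +
      μ (μ (μ z v) (α u)) (α (α w)) +
      μ (μ (μ z v) (α w)) (α (α u)) +
      μ (μ (μ z w) (α u)) (α (α v)) +
      μ (μ (μ z w) (α v)) (α (α u))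
    = μ (μ (α u) (α v)) (μ (α w) (α z)) +
      μ (μ (α u) (α v)) (μ (α z) (α w)) +
      μ (μ (α u) (α w)) (μ (α v) (α z)) +
      μ (μ (α u) (α w)) (μ (α z) (α v)) +
      μ (μ (α u) (α z)) (μ (α v) (α w)) +
      μ (μ (α u) (α z)) (μ (α w) (α v)) +
      μ (μ (α v) (α u)) (μ (α w) (α z)) +
      μ (μ (α v) (α u)) (μ (α z) (α w)) +
      μ (μ (α v) (α w)) (μ (α u) (α z)) +
      μ (μ (α v) (α w)) (μ (α z) (α u)) +
      μ (μ (α v) (α z)) (μ (α u) (α w)) +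
      μ (μ (α v) (α z)) (μ (α w) (α u)) +
      μ (μ (α w) (α u)) (μ (α v) (α z)) +
      μ (μ (α w) (α u)) (μ (α z) (α v)) +
      μ (μ (α w) (α v)) (μ (α u) (α z)) +
      μ (μ (α w) (α v)) (μ (α z) (α u)) +
      μ (μ (α w) (α z)) (μ (α u) (α v)) +
      μ (μ (α w) (α z)) (μ (α v) (α u)) +
      μ (μ (α z) (α u)) (μ (α v) (α w)) +
      μ (μ (α z) (α u)) (μ (α w) (α v)) +
      μ (μ (α z) (α v)) (μ (α u) (α w)) +
      μ (μ (α z) (α v)) (μ (α w) (α u)) +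
      μ (μ (α z) (α w)) (μ (α u) (α v)) +
      μ (μ (α z) (α w)) (μ (α v) (α u)) := by
  have e : ∀ y : A, μ (μ (μ y y) (α y)) (α (α y)) - μ (μ (α y) (α y)) (μ (α y) (α y)) = 0 :=
    fun y => sub_eq_zero_of_eq (hD y)
  have key : (μ (μ (μ (u+v+w+z) (u+v+w+z)) (α (u+v+w+z))) (α (α (u+v+w+z))) - μ (μ (α (u+v+w+z)) (α (u+v+w+z))) (μ (α (u+v+w+z)) (α (u+v+w+z))))
      - (μ (μ (μ (u+v+w) (u+v+w)) (α (u+v+w))) (α (α (u+v+w))) - μ (μ (α (u+v+w)) (α (u+v+w))) (μ (α (u+v+w)) (α (u+v+w))))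
      - (μ (μ (μ (u+v+z) (u+v+z)) (α (u+v+z))) (α (α (u+v+z))) - μ (μ (α (u+v+z)) (α (u+v+z))) (μ (α (u+v+z)) (α (u+v+z))))
      - (μ (μ (μ (u+w+z) (u+w+z)) (α (u+w+z))) (α (α (u+w+z))) - μ (μ (α (u+w+z)) (α (u+w+z))) (μ (α (u+w+z)) (α (u+w+z))))
      - (μ (μ (μ (v+w+z) (v+w+z)) (α (v+w+z))) (α (α (v+w+z))) - μ (μ (α (v+w+z)) (α (v+w+z))) (μ (α (v+w+z)) (α (v+w+z))))
      + (μ (μ (μ (u+v) (u+v)) (α (u+v))) (α (α (u+v))) - μ (μ (α (u+v)) (α (u+v))) (μ (α (u+v)) (α (u+v))))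
      + (μ (μ (μ (u+w) (u+w)) (α (u+w))) (α (α (u+w))) - μ (μ (α (u+w)) (α (u+w))) (μ (α (u+w)) (α (u+w))))
      + (μ (μ (μ (u+z) (u+z)) (α (u+z))) (α (α (u+z))) - μ (μ (α (u+z)) (α (u+z))) (μ (α (u+z)) (α (u+z))))
      + (μ (μ (μ (v+w) (v+w)) (α (v+w))) (α (α (v+w))) - μ (μ (α (v+w)) (α (v+w))) (μ (α (v+w)) (α (v+w))))
      + (μ (μ (μ (v+z) (v+z)) (α (v+z))) (α (α (v+z))) - μ (μ (α (v+z)) (α (v+z))) (μ (α (v+z)) (α (v+z))))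
      + (μ (μ (μ (w+z) (w+z)) (α (w+z))) (α (α (w+z))) - μ (μ (α (w+z)) (α (w+z))) (μ (α (w+z)) (α (w+z))))
      - (μ (μ (μ (u) (u)) (α (u))) (α (α (u))) - μ (μ (α (u)) (α (u))) (μ (α (u)) (α (u))))
      - (μ (μ (μ (v) (v)) (α (v))) (α (α (v))) - μ (μ (α (v)) (α (v))) (μ (α (v)) (α (v))))
      - (μ (μ (μ (w) (w)) (α (w))) (α (α (w))) - μ (μ (α (w)) (α (w))) (μ (α (w)) (α (w))))
      - (μ (μ (μ (z) (z)) (α (z))) (α (α (z))) - μ (μ (α (z)) (α (z))) (μ (α (z)) (α (z)))) = 0 := by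
    rw [e (u+v+w+z), e (u+v+w), e (u+v+z), e (u+w+z), e (v+w+z), e (u+v), e (u+w), e (u+z), e (v+w), e (v+z), e (w+z), e (u), e (v), e (w), e (z)]; abel
  rw [← sub_eq_zero, ← key]
  simp only [map_add, LinearMap.add_apply]
  abel


private lemma pcomp (α : A →ₗ[k] A) (e f : ℕ) (v : A) :
    (α ^ e) ((α ^ f) v) = (α ^ (e + f)) v := by
  rw [pow_add, Module.End.mul_apply]

private lemma psucc (α : A →ₗ[k] A) (f : ℕ) (v : A) :
    α ((α ^ f) v) = (α ^ (f + 1)) v := by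
  rw [pow_succ', Module.End.mul_apply]

private lemma powmul (μ : A →ₗ[k] A →ₗ[k] A) (α : A →ₗ[k] A) (hmul : IsMultiplicative μ α)
    (s : ℕ) (u v : A) : (α ^ s) (μ u v) = μ ((α ^ s) u) ((α ^ s) v) := by
  induction s with
  | zero => simp
  | succ t ih => rw [← psucc, ← psucc, ← psucc, ih, hmul]

private lemma homPow_succ (μ : A →ₗ[k] A →ₗ[k] A) (α : A →ₗ[k] A) (x : A) (m : ℕ) :
    homPow μ α x (m + 2) = μ (homPow μ α x (m + 1)) ((α ^ m) x) := rfl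

/-- the mixed bracket `⟨i, n-i⟩`. -/
private def brr (μ : A →ₗ[k] A →ₗ[k] A) (α : A →ₗ[k] A) (x : A) (n i : ℕ) : A :=
  μ ((α ^ (n - i - 1)) (homPow μ α x i)) ((α ^ (i - 1)) (homPow μ α x (n - i)))

private lemma brdef (μ : A →ₗ[k] A →ₗ[k] A) (α : A →ₗ[k] A) (x : A) (n : ℕ) (hn : 2 ≤ n) :
    homPow μ α x n = brr μ α x n (n - 1) := by
  obtain ⟨m, rfl⟩ : ∃ m, n = m + 2 := ⟨n - 2, by omega⟩
  rw [homPow_succ, brr]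
  rw [show m + 2 - (m + 2 - 1) - 1 = 0 by omega, show m + 2 - 1 - 1 = m by omega,
    show m + 2 - (m + 2 - 1) = 1 by omega]
  simp [homPow]

private lemma ihp (μ : A →ₗ[k] A →ₗ[k] A) (α : A →ₗ[k] A) (hmul : IsMultiplicative μ α)
    (n : ℕ) (IH : ∀ m, m < n → 2 ≤ m → IsNthHomPowerAssoc μ α m) (x : A)
    (e i j : ℕ) (hi : 1 ≤ i) (hj : 1 ≤ j) (hij : i + j < n) :
    μ ((α ^ (e + (j - 1))) (homPow μ α x i)) ((α ^ (e + (i - 1))) (homPow μ α x j))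
      = (α ^ e) (homPow μ α x (i + j)) := by
  have h := IH (i + j) hij (by omega) x i hi (by omega)
  rw [show i + j - i - 1 = j - 1 by omega, show i + j - i = j by omega] at h
  rw [h, powmul μ α hmul, pcomp, pcomp]

private lemma E1 (μ : A →ₗ[k] A →ₗ[k] A) (α : A →ₗ[k] A) (hmul : IsMultiplicative μ α)
    (I3 : ∀ y : A, μ (μ y y) (α y) = μ (α y) (μ y y))
    (n : ℕ) (IH : ∀ m, m < n → 2 ≤ m → IsNthHomPowerAssoc μ α m) (x : A)
    (i j l : ℕ) (hi : 1 ≤ i) (hj : 1 ≤ j) (hl : 1 ≤ l) (hsum : i + j + l = n) :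
    brr μ α x n (n-i) + brr μ α x n (n-j) + brr μ α x n (n-l)
      = brr μ α x n i + brr μ α x n j + brr μ α x n l := by
  have hF : ∀ s t u, 1 ≤ s → 1 ≤ t → 1 ≤ u → s + t + u = n →
      μ (μ ((α^(n-s-2)) (homPow μ α x s)) ((α^(n-t-2)) (homPow μ α x t)))
        (α ((α^(n-u-2)) (homPow μ α x u))) = brr μ α x n (n-u) := by
    intro s t u hs ht hu hstu
    have h1 := ihp μ α hmul n IH x (u-1) s t hs ht (by omega)
    rw [show n-s-2 = u-1+(t-1) by omega, show n-t-2 = u-1+(s-1) by omega, h1,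
      psucc α (n-u-2) (homPow μ α x u), show n-u-2+1 = n-u-1 by omega,
      show s+t = n-u by omega, brr,
      show n-(n-u)-1 = u-1 by omega, show n-(n-u) = u by omega]
  have hG : ∀ s t u, 1 ≤ s → 1 ≤ t → 1 ≤ u → s + t + u = n →
      μ (α ((α^(n-s-2)) (homPow μ α x s)))
        (μ ((α^(n-t-2)) (homPow μ α x t)) ((α^(n-u-2)) (homPow μ α x u)))
        = brr μ α x n s := by
    intro s t u hs ht hu hstu
    have h1 := ihp μ α hmul n IH x (s-1) t u ht hu (by omega)
    rw [show n-t-2 = s-1+(u-1) by omega, show n-u-2 = s-1+(t-1) by omega, h1,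
      psucc α (n-s-2) (homPow μ α x s), show n-s-2+1 = n-s-1 by omega,
      show t+u = n-s by omega, brr]
  have P := perm3 μ α I3 ((α^(n-i-2)) (homPow μ α x i)) ((α^(n-j-2)) (homPow μ α x j))
      ((α^(n-l-2)) (homPow μ α x l))
  rw [hF i j l hi hj hl (by omega), hF i l j hi hl hj (by omega),
    hF j i l hj hi hl (by omega), hF j l i hj hl hi (by omega),
    hF l i j hl hi hj (by omega), hF l j i hl hj hi (by omega),
    hG i j l hi hj hl (by omega), hG i l j hi hl hj (by omega),
    hG j i l hj hi hl (by omega), hG j l i hj hl hi (by omega),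
    hG l i j hl hi hj (by omega), hG l j i hl hj hi (by omega)] at P
  linear_combination (norm := module) ((2:k)⁻¹) • P

private lemma commLem (μ : A →ₗ[k] A →ₗ[k] A) (α : A →ₗ[k] A) (hmul : IsMultiplicative μ α)
    (I3 : ∀ y : A, μ (μ y y) (α y) = μ (α y) (μ y y))
    (n : ℕ) (hn : 3 ≤ n) (IH : ∀ m, m < n → 2 ≤ m → IsNthHomPowerAssoc μ α m) (x : A) :
    ∀ j, 1 ≤ j → j ≤ n - 1 → brr μ α x n j = brr μ α x n (n - j) := by
  have cm : ∀ m, 1 ≤ m → m ≤ n - 1 →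
      brr μ α x n (n-m) + (m:k) • brr μ α x n 1
        = brr μ α x n m + (m:k) • brr μ α x n (n-1) := by
    intro m hm1
    induction m, hm1 using Nat.le_induction with
    | base => intro _; push_cast; module
    | succ m hm ihm =>
      intro hm2
      have e := E1 μ α hmul I3 n IH x m 1 (n-(m+1)) hm le_rfl (by omega) (by omega)
      rw [show n-(n-(m+1)) = m+1 by omega] at e
      have ih := ihm (by omega)
      push_cast
      linear_combination (norm := module) ih - e
  have h1 : brr μ α x n 1 = brr μ α x n (n-1) := by
    have e := cm (n-1) (by omega) le_rfl
    rw [show n-(n-1) = 1 by omega] at e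
    have hcast : (((n-1:ℕ)):k) = (n:k) - 1 := by
      push_cast [Nat.cast_sub (show 1 ≤ n by omega)]; ring
    rw [hcast] at e
    have hne : (n:k) ≠ 0 := Nat.cast_ne_zero.mpr (by omega)
    have h0 : (n:k) • (brr μ α x n 1 - brr μ α x n (n-1)) = 0 := by
      linear_combination (norm := module) e
    rcases smul_eq_zero.mp h0 with h' | h'
    · exact absurd h' hne
    · exact sub_eq_zero.mp h'
  intro j hj1 hj2
  have e := cm j hj1 hj2
  linear_combination (norm := module) ((j:k)) • h1 - e

private def fq : ℕ → ℚ
  | 0 => 0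
  | 1 => 1
  | (t+2) => (8 * fq (t+1) - 3 * fq t + 4)/3

private lemma fq_mono : ∀ t : ℕ, 0 ≤ fq t ∧ fq t + 1 ≤ fq (t+1) := by
  intro t
  induction t with
  | zero => norm_num [fq]
  | succ t ih =>
    obtain ⟨h1, h2⟩ := ih
    refine ⟨by linarith, ?_⟩
    rw [show fq (t+1+1) = (8 * fq (t+1) - 3 * fq t + 4)/3 from rfl]
    linarith


private lemma fq_pos' : ∀ t : ℕ, 1 ≤ t → 1 ≤ fq t := by
  intro t ht
  induction t with
  | zero => omega
  | succ t ih =>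
    rcases Nat.eq_zero_or_pos t with h | h
    · subst h; norm_num [fq]
    · have h1 := (fq_mono t).2
      have h2 := ih h
      linarith

private lemma Rlem (μ : A →ₗ[k] A →ₗ[k] A) (α : A →ₗ[k] A) (hmul : IsMultiplicative μ α)
    (I4 : ∀ y : A, μ (μ (μ y y) (α y)) (α (α y)) = μ (μ (α y) (α y)) (μ (α y) (α y)))
    (n : ℕ) (hn : 4 ≤ n) (IH : ∀ m, m < n → 2 ≤ m → IsNthHomPowerAssoc μ α m) (x : A)
    (hcomm : ∀ j, 1 ≤ j → j ≤ n - 1 → brr μ α x n j = brr μ α x n (n - j))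
    (t : ℕ) (ht : 1 ≤ t) (ht2 : t ≤ n - 3) :
    (12:k) • homPow μ α x n + (6:k) • brr μ α x n t + (6:k) • brr μ α x n (t+2)
      = (8:k) • brr μ α x n 2 + (16:k) • brr μ α x n (t+1) := by
  set s : ℕ := n - 2 - t with hs
  have hF4 : ∀ v1 v2 v3 v4, 1 ≤ v1 → 1 ≤ v2 → 1 ≤ v3 → 1 ≤ v4 → v1+v2+v3+v4 = n →
      μ (μ (μ ((α^(n-v1-3)) (homPow μ α x v1)) ((α^(n-v2-3)) (homPow μ α x v2)))
          (α ((α^(n-v3-3)) (homPow μ α x v3))))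
        (α (α ((α^(n-v4-3)) (homPow μ α x v4)))) = brr μ α x n (n-v4) := by
    intro v1 v2 v3 v4 hv1 hv2 hv3 hv4 hsum
    have h1 := ihp μ α hmul n IH x (n-v1-v2-2) v1 v2 hv1 hv2 (by omega)
    rw [show n-v1-3 = n-v1-v2-2+(v2-1) by omega, show n-v2-3 = n-v1-v2-2+(v1-1) by omega, h1,
      psucc α (n-v3-3) (homPow μ α x v3), show n-v3-3+1 = n-v3-2 by omega]
    have h2 := ihp μ α hmul n IH x (v4-1) (v1+v2) v3 (by omega) hv3 (by omega)
    rw [show n-v1-v2-2 = v4-1+(v3-1) by omega, show n-v3-2 = v4-1+(v1+v2-1) by omega, h2,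
      show v1+v2+v3 = n-v4 by omega, psucc α (n-v4-3) (homPow μ α x v4),
      psucc α (n-v4-3+1) (homPow μ α x v4), show n-v4-3+1+1 = n-v4-1 by omega,
      brr, show n-(n-v4)-1 = v4-1 by omega, show n-(n-v4) = v4 by omega]
  have hG4 : ∀ v1 v2 v3 v4, 1 ≤ v1 → 1 ≤ v2 → 1 ≤ v3 → 1 ≤ v4 → v1+v2+v3+v4 = n →
      μ (μ (α ((α^(n-v1-3)) (homPow μ α x v1))) (α ((α^(n-v2-3)) (homPow μ α x v2))))
        (μ (α ((α^(n-v3-3)) (homPow μ α x v3))) (α ((α^(n-v4-3)) (homPow μ α x v4))))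
        = brr μ α x n (v1+v2) := by
    intro v1 v2 v3 v4 hv1 hv2 hv3 hv4 hsum
    rw [← hmul ((α^(n-v1-3)) (homPow μ α x v1)) ((α^(n-v2-3)) (homPow μ α x v2)),
      ← hmul ((α^(n-v3-3)) (homPow μ α x v3)) ((α^(n-v4-3)) (homPow μ α x v4))]
    have h1 := ihp μ α hmul n IH x (n-v1-v2-2) v1 v2 hv1 hv2 (by omega)
    have h2 := ihp μ α hmul n IH x (n-v3-v4-2) v3 v4 hv3 hv4 (by omega)
    rw [show n-v1-3 = n-v1-v2-2+(v2-1) by omega, show n-v2-3 = n-v1-v2-2+(v1-1) by omega, h1,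
      show n-v3-3 = n-v3-v4-2+(v4-1) by omega, show n-v4-3 = n-v3-v4-2+(v3-1) by omega, h2,
      psucc α (n-v1-v2-2) (homPow μ α x (v1+v2)),
      psucc α (n-v3-v4-2) (homPow μ α x (v3+v4)), show n-v1-v2-2+1 = n-(v1+v2)-1 by omega,
      show n-v3-v4-2+1 = v1+v2-1 by omega, show v3+v4 = n-(v1+v2) by omega, brr]
  have P := perm4 μ α I4 ((α^(n-1-3)) (homPow μ α x 1)) ((α^(n-1-3)) (homPow μ α x 1))
      ((α^(n-t-3)) (homPow μ α x t)) ((α^(n-s-3)) (homPow μ α x s))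
  rw [hF4 1 1 s t (by omega) (by omega) (by omega) (by omega) (by omega),
    hF4 1 1 t s (by omega) (by omega) (by omega) (by omega) (by omega),
    hF4 1 s 1 t (by omega) (by omega) (by omega) (by omega) (by omega),
    hF4 1 s t 1 (by omega) (by omega) (by omega) (by omega) (by omega),
    hF4 1 t 1 s (by omega) (by omega) (by omega) (by omega) (by omega),
    hF4 1 t s 1 (by omega) (by omega) (by omega) (by omega) (by omega),
    hF4 s 1 1 t (by omega) (by omega) (by omega) (by omega) (by omega),
    hF4 s 1 t 1 (by omega) (by omega) (by omega) (by omega) (by omega),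
    hF4 s t 1 1 (by omega) (by omega) (by omega) (by omega) (by omega),
    hF4 t 1 1 s (by omega) (by omega) (by omega) (by omega) (by omega),
    hF4 t 1 s 1 (by omega) (by omega) (by omega) (by omega) (by omega),
    hF4 t s 1 1 (by omega) (by omega) (by omega) (by omega) (by omega),
    hG4 1 1 s t (by omega) (by omega) (by omega) (by omega) (by omega),
    hG4 1 1 t s (by omega) (by omega) (by omega) (by omega) (by omega),
    hG4 1 s 1 t (by omega) (by omega) (by omega) (by omega) (by omega),
    hG4 1 s t 1 (by omega) (by omega) (by omega) (by omega) (by omega),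
    hG4 1 t 1 s (by omega) (by omega) (by omega) (by omega) (by omega),
    hG4 1 t s 1 (by omega) (by omega) (by omega) (by omega) (by omega),
    hG4 s 1 1 t (by omega) (by omega) (by omega) (by omega) (by omega),
    hG4 s 1 t 1 (by omega) (by omega) (by omega) (by omega) (by omega),
    hG4 s t 1 1 (by omega) (by omega) (by omega) (by omega) (by omega),
    hG4 t 1 1 s (by omega) (by omega) (by omega) (by omega) (by omega),
    hG4 t 1 s 1 (by omega) (by omega) (by omega) (by omega) (by omega),
    hG4 t s 1 1 (by omega) (by omega) (by omega) (by omega) (by omega)] at P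
  rw [show (1:ℕ)+1 = 2 from rfl] at P
  rw [show 1+t = t+1 by omega, show 1+s = s+1 by omega, show s+t = t+s by omega] at P
  rw [show t+s = n-2 by omega, show s+1 = n-(t+1) by omega, show n-s = t+2 by omega] at P
  rw [← hcomm t (by omega) (by omega), ← hcomm (t+1) (by omega) (by omega),
    ← hcomm 2 (by omega) (by omega), ← brdef μ α x n (by omega)] at P
  linear_combination (norm := module) P


private lemma stepLem (μ : A →ₗ[k] A →ₗ[k] A) (α : A →ₗ[k] A) (hmul : IsMultiplicative μ α)
    (I3 : ∀ y : A, μ (μ y y) (α y) = μ (α y) (μ y y))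
    (I4 : ∀ y : A, μ (μ (μ y y) (α y)) (α (α y)) = μ (μ (α y) (α y)) (μ (α y) (α y)))
    (n : ℕ) (hn : 2 ≤ n)
    (IH : ∀ m, m < n → 2 ≤ m → IsNthHomPowerAssoc μ α m) :
    IsNthHomPowerAssoc μ α n := by
  intro x i hi1 hi2
  have key : ∀ j, 1 ≤ j → j ≤ n - 1 → homPow μ α x n = brr μ α x n j := by
    intro j hj1 hj2
    rcases Nat.lt_or_ge n 3 with h2 | h3
    · have hj : j = 1 := by omega
      subst hj
      have hb := brdef μ α x n hn
      rwa [show n - 1 = 1 by omega] at hb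
    · have hcomm := commLem μ α hmul I3 n h3 IH x
      have hb := brdef μ α x n hn
      have hb2 : homPow μ α x n = brr μ α x n (n-1) := hb
      rcases Nat.lt_or_ge n 4 with h3' | h4
      · -- n = 3
        have hn3 : n = 3 := by omega
        subst hn3
        interval_cases j
        · rw [hb2, hcomm 2 (by norm_num) (by norm_num)]
        · exact hb2
      · -- n ≥ 4
        have CL : ∀ t, t + 1 ≤ n - 1 →
            brr μ α x n (t+1) - homPow μ α x n
              = ((fq t : ℚ) : k) • (brr μ α x n 2 - homPow μ α x n) := by
          intro t
          induction t using Nat.strong_induction_on with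
          | _ t IHt =>
            intro ht
            rcases Nat.lt_or_ge t 2 with hlt | hge
            · interval_cases t
              · rw [show ((fq 0 : ℚ):k) = 0 by rw [show fq 0 = 0 from rfl]; norm_num,
                  zero_smul, sub_eq_zero, show (0:ℕ)+1 = 1 from rfl,
                  hcomm 1 (by omega) (by omega), show n-1 = n-1 from rfl, hb]
              · rw [show ((fq 1 : ℚ):k) = 1 by rw [show fq 1 = 1 from rfl]; norm_num,
                  one_smul, show (1:ℕ)+1 = 2 from rfl]
            · obtain ⟨t2, rfl⟩ : ∃ t2, t = t2 + 2 := ⟨t - 2, by omega⟩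
              have h0 := IHt t2 (by omega) (by omega)
              have h1 := IHt (t2+1) (by omega) (by omega)
              have hR := Rlem μ α hmul I4 n h4 IH x hcomm (t2+1) (by omega) (by omega)
              rw [show (t2+1)+2 = t2+2+1 by omega] at hR
              have hc : ((fq (t2+2) : ℚ) : k)
                  = (8 * ((fq (t2+1) : ℚ):k) - 3 * ((fq t2 : ℚ):k) + 4)/3 := by
                rw [show fq (t2+2) = (8 * fq (t2+1) - 3 * fq t2 + 4)/3 from rfl]
                push_cast; ring
              rw [hc]
              linear_combination (norm := module) ((6:k)⁻¹) • hR + ((8:k)/3) • h1 - h0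
        have hW : brr μ α x n 2 - homPow μ α x n = 0 := by
          have e := CL (n-2) (by omega)
          rw [show n-2+1 = n-1 by omega, ← hb2, sub_self] at e
          have hne : ((fq (n-2) : ℚ):k) ≠ 0 := by
            have hp := fq_pos' (n-2) (by omega)
            rw [Rat.cast_ne_zero]
            intro h0
            rw [h0] at hp
            norm_num at hp
          rcases smul_eq_zero.mp e.symm with h' | h'
          · exact absurd h' hne
          · exact h'
        obtain ⟨t, rfl⟩ : ∃ t, j = t + 1 := ⟨j - 1, by omega⟩
        have e := CL t (by omega)
        rw [hW, smul_zero, sub_eq_zero] at e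
        exact e.symm
  have h := key i hi1 hi2
  rwa [brr] at h

/-- Corollary: multiplicative right Hom-alternative and multiplicative
non-commutative Hom-Jordan algebras are Hom-power associative. -/
theorem stmt19 (μ : A →ₗ[k] A →ₗ[k] A) (α : A →ₗ[k] A)
    (hmul : IsMultiplicative μ α)
    (h : IsRightHomAlternative μ α ∨ IsNoncommHomJordan μ α) :
    IsHomPowerAssoc μ α := by
  have I3 : ∀ y : A, μ (μ y y) (α y) = μ (α y) (μ y y) := by
    intro y
    rcases h with hra | hj
    · have := hra y y; rw [homAssoc, sub_eq_zero] at this; exact this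
    · have := hj.1 y y; rw [homAssoc, sub_eq_zero] at this; exact this
  have I4 : ∀ y : A, μ (μ (μ y y) (α y)) (α (α y)) = μ (μ (α y) (α y)) (μ (α y) (α y)) := by
    intro y
    have key : homAssoc μ α (μ y y) (α y) (α y) = 0 := by
      rcases h with hra | hj
      · exact hra (α y) (μ y y)
      · exact hj.2 y y
    rw [homAssoc, sub_eq_zero] at key
    rw [key, hmul]
  intro n
  induction n using Nat.strong_induction_on with
  | _ n IHn =>
    intro hn
    exact stepLem μ α hmul I3 I4 n hn (fun m hm h2m => IHn m hm h2m)
end
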